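/- Suppose αU*_α 1 = 1 m-a.e. for all α > 0 and there exists a U-excessive function s ∈ L¹(E,m) with s > 0 m-a.e. Then U is m-recurrent. -/

import Mathlib

open MeasureTheory ENNReal Filter Set
open Topology

/-- A sub-Markovian resolvent of kernels on a measurable space `E`. -/
structure SubMarkovResolvent (E : Type*) [MeasurableSpace E] where
  /-- the kernel `U_α` for each `α > 0` -/
  kernel : ℝ → E → MeasureTheory.Measure E
  measurable_op : ∀ α : ℝ, 0 < α → ∀ f : E → ℝ≥0∞, Measurable f →
    Measurable (fun x => ∫⁻ y, f y ∂(kernel α x))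
  resolvent_eq : ∀ α β : ℝ, 0 < α → α ≤ β → ∀ f : E → ℝ≥0∞, Measurable f → ∀ x,
    ∫⁻ y, f y ∂(kernel α x)
      = (∫⁻ y, f y ∂(kernel β x))
        + ENNReal.ofReal (β - α) * ∫⁻ y, (∫⁻ z, f z ∂(kernel β y)) ∂(kernel α x)
  subMarkov : ∀ α : ℝ, 0 < α → ∀ x, ENNReal.ofReal α * kernel α x Set.univ ≤ 1

namespace SubMarkovResolvent

variable {E : Type*} [MeasurableSpace E]

/-- The action of `U_α` on positive measurable functions. -/
noncomputable def op (R : SubMarkovResolvent E) (α : ℝ) (f : E → ℝ≥0∞) (x : E) : ℝ≥0∞ :=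
  ∫⁻ y, f y ∂(R.kernel α x)

/-- The action of `U_α` on real-valued functions. -/
noncomputable def opR (R : SubMarkovResolvent E) (α : ℝ) (f : E → ℝ) (x : E) : ℝ :=
  ∫ y, f y ∂(R.kernel α x)

/-- The initial (potential) kernel `U = sup_{α > 0} U_α`. -/
noncomputable def pot (R : SubMarkovResolvent E) (f : E → ℝ≥0∞) (x : E) : ℝ≥0∞ :=
  ⨆ (α : ℝ) (_ : 0 < α), R.op α f x

/-- `m` is sub-invariant: `m ∘ (α U_α) ≤ m` for all `α > 0`. -/
def SubInvariant (R : SubMarkovResolvent E) (m : Measure E) : Prop :=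
  ∀ α : ℝ, 0 < α → ∀ f : E → ℝ≥0∞, Measurable f →
    ENNReal.ofReal α * ∫⁻ x, R.op α f x ∂m ≤ ∫⁻ x, f x ∂m

/-- `U` is `m`-transient. -/
def Transient (R : SubMarkovResolvent E) (m : Measure E) : Prop :=
  ∃ f : E → ℝ≥0∞, Measurable f ∧ (∫⁻ x, f x ∂m < ⊤) ∧
    (∀ᵐ x ∂m, 0 < f x) ∧ (∀ᵐ x ∂m, R.pot f x < ⊤)

/-- `U` is `m`-recurrent. -/
def Recurrent (R : SubMarkovResolvent E) (m : Measure E) : Prop :=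
  ∀ f : E → ℝ≥0∞, Measurable f → (∫⁻ x, f x ∂m < ⊤) →
    m {x | 0 < R.pot f x ∧ R.pot f x < ⊤} = 0

/-- `A` is `U`-absorbing with respect to `m`. -/
def Absorbing (R : SubMarkovResolvent E) (m : Measure E) (A : Set E) : Prop :=
  MeasurableSet A ∧ ∀ᵐ x ∂m, x ∈ A → R.pot (Set.indicator Aᶜ 1) x = 0

/-- `U` is `m`-irreducible. -/
def Irreducible (R : SubMarkovResolvent E) (m : Measure E) : Prop :=
  ∀ A : Set E, R.Absorbing m A → m A = 0 ∨ m Aᶜ = 0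

/-- `u` is `U`-excessive: supermedian and `α U_α u ↑ u` as `α → ∞`. -/
def Excessive (R : SubMarkovResolvent E) (u : E → ℝ≥0∞) : Prop :=
  Measurable u ∧ (∀ α : ℝ, 0 < α → ∀ x, ENNReal.ofReal α * R.op α u x ≤ u x) ∧
    (∀ x, (⨆ (α : ℝ) (_ : 0 < α), ENNReal.ofReal α * R.op α u x) = u x)

/-- The complete maximum principle for the initial kernel of `U`. -/
def CompleteMaxPrinciple (R : SubMarkovResolvent E) : Prop :=
  ∀ (f g : E → ℝ≥0∞) (c : ℝ≥0∞), Measurable f → Measurable g →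
    (∀ x, 0 < f x → R.pot f x ≤ R.pot g x + c) → ∀ x, R.pot f x ≤ R.pot g x + c

/-- `U` and `U*` are in weak duality with respect to `m`. -/
def InDuality (R S : SubMarkovResolvent E) (m : Measure E) : Prop :=
  ∀ α : ℝ, 0 < α → ∀ f g : E → ℝ≥0∞, Measurable f → Measurable g →
    ∫⁻ x, f x * R.op α g x ∂m = ∫⁻ x, g x * S.op α f x ∂m

/-- A real-valued function `v` is `U`-invariant with respect to `m`:
`U_α(v f) = v ⋅ U_α f` `m`-a.e. for all `α > 0` and bounded positive measurable `f`. -/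
def Invariant (R : SubMarkovResolvent E) (m : Measure E) (v : E → ℝ) : Prop :=
  ∀ α : ℝ, 0 < α → ∀ f : E → ℝ, Measurable f → (∀ x, 0 ≤ f x) → (∃ C : ℝ, ∀ x, f x ≤ C) →
    ∀ᵐ x ∂m, R.opR α (fun y => v y * f y) x = v x * R.opR α f x

end SubMarkovResolvent


namespace SubMarkovResolvent

variable {E : Type*} [MeasurableSpace E]

/-- Iterates of the kernel `U_1`. -/
noncomputable def opIt (R : SubMarkovResolvent E) (f : E → ℝ≥0∞) : ℕ → E → ℝ≥0∞
  | 0 => f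
  | (k+1) => R.op 1 (R.opIt f k)

lemma opIt_measurable (R : SubMarkovResolvent E) {f : E → ℝ≥0∞} (hf : Measurable f) :
    ∀ k, Measurable (R.opIt f k)
  | 0 => hf
  | (k+1) => R.measurable_op 1 one_pos _ (R.opIt_measurable hf k)

lemma op_mono (R : SubMarkovResolvent E) {f g : E → ℝ≥0∞} (h : ∀ y, f y ≤ g y) (α : ℝ) (x : E) :
    R.op α f x ≤ R.op α g x := lintegral_mono h

lemma opIt_mono (R : SubMarkovResolvent E) {f g : E → ℝ≥0∞} (h : ∀ y, f y ≤ g y) :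
    ∀ k x, R.opIt f k x ≤ R.opIt g k x
  | 0, x => h x
  | (k+1), x => R.op_mono (fun y => R.opIt_mono h k y) 1 x

lemma op_anti (R : SubMarkovResolvent E) {f : E → ℝ≥0∞} (hf : Measurable f) {α β : ℝ}
    (hα : 0 < α) (hαβ : α ≤ β) (x : E) : R.op β f x ≤ R.op α f x := by
  have h : R.op α f x = R.op β f x + ENNReal.ofReal (β - α) * R.op α (R.op β f) x :=
    R.resolvent_eq α β hα hαβ f hf x
  rw [h]; exact le_self_add

lemma op_le_pot (R : SubMarkovResolvent E) (f : E → ℝ≥0∞) {α : ℝ} (hα : 0 < α) (x : E) :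
    R.op α f x ≤ R.pot f x :=
  le_iSup₂ (f := fun (α : ℝ) (_ : 0 < α) => R.op α f x) α hα

lemma pot_eq_iSup_nat (R : SubMarkovResolvent E) {f : E → ℝ≥0∞} (hf : Measurable f) (x : E) :
    R.pot f x = ⨆ n : ℕ, R.op (1/((n:ℝ)+1)) f x := by
  refine le_antisymm (iSup₂_le fun α hα => ?_) (iSup_le fun n => R.op_le_pot f (by positivity) x)
  obtain ⟨n, hn⟩ := exists_nat_gt (1/α)
  have hn' : 1/((n:ℝ)+1) ≤ α := by
    rw [div_le_iff₀ (by positivity)]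
    have := (div_lt_iff₀ hα).mp hn
    nlinarith
  exact le_trans (R.op_anti hf (by positivity) hn' x)
    (le_iSup (fun n : ℕ => R.op (1/((n:ℝ)+1)) f x) n)

lemma pot_measurable (R : SubMarkovResolvent E) {f : E → ℝ≥0∞} (hf : Measurable f) :
    Measurable (R.pot f) := by
  have : R.pot f = fun x => ⨆ n : ℕ, R.op (1/((n:ℝ)+1)) f x :=
    funext fun x => R.pot_eq_iSup_nat hf x
  rw [this]
  exact Measurable.iSup fun n => R.measurable_op _ (by positivity) f hf

/-- Iterated resolvent expansion. -/
lemma op_expand (R : SubMarkovResolvent E) {f : E → ℝ≥0∞} (hf : Measurable f) {ε : ℝ}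
    (hε : 0 < ε) (hε1 : ε ≤ 1) (k : ℕ) (x : E) :
    R.op ε f x = (∑ j ∈ Finset.range k, (ENNReal.ofReal (1-ε))^j * R.opIt f (j+1) x)
      + (ENNReal.ofReal (1-ε))^k * R.op ε (R.opIt f k) x := by
  induction k with
  | zero => simp [opIt]
  | succ k ih =>
    have hres : R.op ε (R.opIt f k) x
        = R.opIt f (k+1) x + ENNReal.ofReal (1-ε) * R.op ε (R.opIt f (k+1)) x :=
      R.resolvent_eq ε 1 hε hε1 (R.opIt f k) (R.opIt_measurable hf k) x
    rw [ih, hres, Finset.sum_range_succ]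
    ring

lemma tsum_le_pot (R : SubMarkovResolvent E) {f : E → ℝ≥0∞} (hf : Measurable f) (x : E) :
    ∑' j : ℕ, R.opIt f (j+1) x ≤ R.pot f x := by
  rw [ENNReal.tsum_eq_iSup_nat]
  refine iSup_le fun k => ?_
  set c : ℕ → ℝ≥0∞ := fun n => ENNReal.ofReal (1 - 1/((n:ℝ)+1)) with hc
  have hc1 : Tendsto c atTop (𝓝 1) := by
    have h0 := tendsto_one_div_add_atTop_nhds_zero_nat (𝕜 := ℝ)
    have h2 : Tendsto (fun n : ℕ => (1:ℝ) - 1/((n:ℝ)+1)) atTop (𝓝 1) := by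
      have := (tendsto_const_nhds (x := (1:ℝ))).sub h0
      simpa using this
    rw [hc]
    have := ENNReal.tendsto_ofReal h2
    simpa using this
  have htend : Tendsto (fun n => ∑ j ∈ Finset.range k, (c n)^j * R.opIt f (j+1) x) atTop
      (𝓝 (∑ j ∈ Finset.range k, R.opIt f (j+1) x)) := by
    have : Tendsto (fun n => ∑ j ∈ Finset.range k, (c n)^j * R.opIt f (j+1) x) atTop
        (𝓝 (∑ j ∈ Finset.range k, (1:ℝ≥0∞)^j * R.opIt f (j+1) x)) := by
      refine tendsto_finset_sum _ fun j _ => ?_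
      exact ENNReal.Tendsto.mul_const (ENNReal.Tendsto.pow hc1) (Or.inl (by simp))
    simpa using this
  refine le_of_tendsto' htend fun n => ?_
  have hεpos : (0:ℝ) < 1/((n:ℝ)+1) := by positivity
  have hεle : 1/((n:ℝ)+1) ≤ 1 := by
    rw [div_le_one (by positivity)]; linarith [Nat.cast_nonneg (α := ℝ) n]
  calc ∑ j ∈ Finset.range k, (c n)^j * R.opIt f (j+1) x
      ≤ R.op (1/((n:ℝ)+1)) f x := by
        rw [R.op_expand hf hεpos hεle k x]
        exact le_self_add
    _ ≤ R.pot f x := R.op_le_pot f hεpos x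

lemma opIt_le_const (R : SubMarkovResolvent E) {f : E → ℝ≥0∞} {C : ℝ≥0∞} (hfC : ∀ y, f y ≤ C) :
    ∀ k x, R.opIt f k x ≤ C := by
  intro k
  induction k with
  | zero => exact hfC
  | succ k ih =>
    intro x
    calc R.opIt f (k+1) x ≤ R.op 1 (fun _ => C) x := R.op_mono (fun y => ih y) 1 x
      _ = C * R.kernel 1 x Set.univ := lintegral_const C
      _ ≤ C * 1 := by
          gcongr
          have := R.subMarkov 1 one_pos x
          simpa using this
      _ = C := mul_one C

lemma pot_le_tsum_of_bounded (R : SubMarkovResolvent E) {f : E → ℝ≥0∞} (hf : Measurable f)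
    {C : ℝ≥0∞} (hC : C ≠ ⊤) (hfC : ∀ y, f y ≤ C) (x : E) :
    R.pot f x ≤ ∑' j : ℕ, R.opIt f (j+1) x := by
  refine iSup₂_le fun α hα => ?_
  rcases le_or_gt α 1 with hα1 | hα1
  · set S := ∑' j : ℕ, R.opIt f (j+1) x with hS
    set c := ENNReal.ofReal (1-α) with hcdef
    have hclt : c < 1 := ENNReal.ofReal_lt_one.mpr (by linarith)
    set D := C * (ENNReal.ofReal α)⁻¹ with hD
    have hDne : D ≠ ⊤ :=
      ENNReal.mul_ne_top hC (ENNReal.inv_ne_top.mpr (ne_of_gt (ENNReal.ofReal_pos.mpr hα)))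
    have hrem : ∀ k, R.op α (R.opIt f k) x ≤ D := by
      intro k
      calc R.op α (R.opIt f k) x ≤ R.op α (fun _ => C) x :=
            R.op_mono (fun y => R.opIt_le_const hfC k y) α x
        _ = C * R.kernel α x Set.univ := lintegral_const C
        _ ≤ C * (ENNReal.ofReal α)⁻¹ := by
            gcongr
            rw [ENNReal.le_inv_iff_mul_le]
            rw [mul_comm]
            exact R.subMarkov α hα x
    have hbound : ∀ k, R.op α f x ≤ S + c^k * D := by
      intro k
      rw [R.op_expand hf hα hα1 k x]
      gcongr
      · calc ∑ j ∈ Finset.range k, c^j * R.opIt f (j+1) x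
            ≤ ∑ j ∈ Finset.range k, R.opIt f (j+1) x := by
              refine Finset.sum_le_sum fun j _ => ?_
              calc c^j * R.opIt f (j+1) x ≤ 1 * R.opIt f (j+1) x :=
                    mul_le_mul_left (pow_le_one' hclt.le j) _
                _ = R.opIt f (j+1) x := one_mul _
          _ ≤ S := ENNReal.sum_le_tsum _
      · exact hrem k
    have htend : Tendsto (fun k => S + c^k * D) atTop (𝓝 S) := by
      have h0 := ENNReal.Tendsto.mul_const
        (ENNReal.tendsto_pow_atTop_nhds_zero_of_lt_one hclt) (Or.inr hDne)
      have := (tendsto_const_nhds (x := S)).add h0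
      simpa using this
    exact ge_of_tendsto' htend hbound
  · calc R.op α f x ≤ R.op 1 f x := R.op_anti hf one_pos hα1.le x
      _ ≤ ∑' j : ℕ, R.opIt f (j+1) x := ENNReal.le_tsum 0

lemma pot_eq_tsum (R : SubMarkovResolvent E) {f : E → ℝ≥0∞} (hf : Measurable f) (x : E) :
    R.pot f x = ∑' j : ℕ, R.opIt f (j+1) x := by
  refine le_antisymm ?_ (R.tsum_le_pot hf x)
  refine iSup₂_le fun α hα => ?_
  set g : ℕ → E → ℝ≥0∞ := fun n y => min (f y) n with hg
  have hg_meas : ∀ n, Measurable (g n) := fun n => hf.min measurable_const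
  have hg_mono : Monotone g := fun a b hab y =>
    min_le_min le_rfl (by exact_mod_cast Nat.cast_le.mpr hab)
  have hg_sup : ∀ y, (⨆ n, g n y) = f y := by
    intro y
    by_cases hy : f y = ⊤
    · have : ∀ n : ℕ, g n y = n := fun n => by
        simp [hg, hy]
      simp only [this]
      rw [ENNReal.iSup_natCast, hy]
    · obtain ⟨n, hn⟩ := ENNReal.exists_nat_gt hy
      refine le_antisymm (iSup_le fun m => min_le_left _ _) (le_iSup_of_le n ?_)
      simp [hg, min_eq_left hn.le]
  have hop : R.op α f x = ⨆ n, R.op α (g n) x := by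
    have h1 : R.op α f x = ∫⁻ y, ⨆ n, g n y ∂(R.kernel α x) := by
      unfold op
      exact lintegral_congr fun y => (hg_sup y).symm
    rw [h1, lintegral_iSup hg_meas hg_mono]
    rfl
  rw [hop]
  refine iSup_le fun n => ?_
  calc R.op α (g n) x ≤ R.pot (g n) x := R.op_le_pot (g n) hα x
    _ ≤ ∑' j : ℕ, R.opIt (g n) (j+1) x :=
        R.pot_le_tsum_of_bounded (hg_meas n) (ENNReal.natCast_ne_top n)
          (fun y => min_le_right _ _) x
    _ ≤ ∑' j : ℕ, R.opIt f (j+1) x :=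
        ENNReal.tsum_le_tsum fun j => R.opIt_mono (fun y => min_le_left _ _) (j+1) x

lemma opIt_pot_eq (R : SubMarkovResolvent E) {f : E → ℝ≥0∞} (hf : Measurable f) :
    ∀ (k : ℕ) (x : E), R.opIt (R.pot f) k x = ∑' j : ℕ, R.opIt f (j + k + 1) x := by
  intro k
  induction k with
  | zero => exact fun x => R.pot_eq_tsum hf x
  | succ k ih =>
    intro x
    have h1 : R.opIt (R.pot f) (k+1) x = R.op 1 (fun y => ∑' j : ℕ, R.opIt f (j + k + 1) y) x := by
      show R.op 1 (R.opIt (R.pot f) k) x = _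
      unfold op
      exact lintegral_congr fun y => ih y
    rw [h1]
    show ∫⁻ y, ∑' j : ℕ, R.opIt f (j + k + 1) y ∂(R.kernel 1 x) = _
    rw [lintegral_tsum fun j => (R.opIt_measurable hf (j + k + 1)).aemeasurable]
    rfl

lemma op1_pot_le_pot (R : SubMarkovResolvent E) {f : E → ℝ≥0∞} (hf : Measurable f) (x : E) :
    R.op 1 (R.pot f) x ≤ R.pot f x := by
  have h1 : R.op 1 (R.pot f) x = ∑' j : ℕ, R.opIt f (j + 1 + 1) x := R.opIt_pot_eq hf 1 x
  rw [h1, R.pot_eq_tsum hf x]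
  exact tsum_comp_le_tsum_of_injective (f := fun j : ℕ => j + 1)
    (fun a b h => by simpa using h) (fun j => R.opIt f (j + 1) x)

end SubMarkovResolvent

section MainAux

open SubMarkovResolvent

variable {E : Type*} [MeasurableSpace E] {R S : SubMarkovResolvent E} {m : Measure E}

/-- Invariance of `m` under `U_1`, from duality and conservativity of the dual. -/
lemma lintegral_op1 (hD : R.InDuality S m)
    (h1 : ∀ α : ℝ, 0 < α → ∀ᵐ x ∂m, ENNReal.ofReal α * S.op α (fun _ => 1) x = 1)
    {h : E → ℝ≥0∞} (hh : Measurable h) :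
    ∫⁻ x, R.op 1 h x ∂m = ∫⁻ x, h x ∂m := by
  have hd : ∫⁻ x, R.op 1 h x ∂m = ∫⁻ x, h x * S.op 1 (fun _ => 1) x ∂m := by
    have := hD 1 one_pos (fun _ => 1) h measurable_const hh
    simpa using this
  rw [hd]
  refine lintegral_congr_ae ?_
  filter_upwards [h1 1 one_pos] with x hx
  have hx' : S.op 1 (fun _ => 1) x = 1 := by simpa using hx
  rw [hx', mul_one]

/-- If two functions agree `m`-a.e., so do their images under `U_1`. -/
lemma op1_congr_ae (hD : R.InDuality S m)
    (h1 : ∀ α : ℝ, 0 < α → ∀ᵐ x ∂m, ENNReal.ofReal α * S.op α (fun _ => 1) x = 1)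
    {h h' : E → ℝ≥0∞} (hh : Measurable h) (hh' : Measurable h') (he : h =ᵐ[m] h') :
    R.op 1 h =ᵐ[m] R.op 1 h' := by
  set N := {x | ¬ h x = h' x} with hN
  have heqset : {x | h x = h' x} = {x | h x ≤ h' x} ∩ {x | h' x ≤ h x} := by
    ext y; simp [Set.mem_inter_iff, le_antisymm_iff]
  have hNmeas : MeasurableSet N := by
    have hmeq : MeasurableSet {x | h x = h' x} := by
      rw [heqset]; exact (measurableSet_le hh hh').inter (measurableSet_le hh' hh)
    rw [hN, ← Set.compl_setOf]
    exact hmeq.compl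
  have hmN : m N = 0 := ae_iff.mp he
  set χ : E → ℝ≥0∞ := N.indicator (fun _ => ⊤) with hχdef
  have hχ : Measurable χ := measurable_const.indicator hNmeas
  have hχ0 : ∫⁻ x, χ x ∂m = 0 := by
    rw [hχdef, lintegral_indicator hNmeas, setLIntegral_const, hmN, mul_zero]
  have hop0 : ∀ᵐ x ∂m, R.op 1 χ x = 0 := by
    have hz : ∫⁻ x, R.op 1 χ x ∂m = 0 := by rw [lintegral_op1 hD h1 hχ, hχ0]
    exact (lintegral_eq_zero_iff (R.measurable_op 1 one_pos _ hχ)).mp hz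
  filter_upwards [hop0] with x hx
  have key : ∀ (u u' : E → ℝ≥0∞), (∀ y, u y ≤ u' y + χ y) → R.op 1 u x ≤ R.op 1 u' x := by
    intro u u' hle
    calc R.op 1 u x ≤ R.op 1 (fun y => u' y + χ y) x := R.op_mono hle 1 x
      _ = R.op 1 u' x + R.op 1 χ x := lintegral_add_right _ hχ
      _ = R.op 1 u' x := by rw [hx, add_zero]
  have hle1 : ∀ y, h y ≤ h' y + χ y := by
    intro y
    by_cases hy : y ∈ N
    · simp [hχdef, Set.indicator_of_mem hy]
    · have : h y = h' y := not_not.mp hy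
      simp [hχdef, Set.indicator_of_notMem hy, this]
  have hle2 : ∀ y, h' y ≤ h y + χ y := by
    intro y
    by_cases hy : y ∈ N
    · simp [hχdef, Set.indicator_of_mem hy]
    · have : h y = h' y := not_not.mp hy
      simp [hχdef, Set.indicator_of_notMem hy, this]
  exact le_antisymm (key _ _ hle1) (key _ _ hle2)

/-- An integrable supermedian (for `U_1`) function satisfies `U_1 v = v` a.e. -/
lemma ae_eq_op1 (hD : R.InDuality S m)
    (h1 : ∀ α : ℝ, 0 < α → ∀ᵐ x ∂m, ENNReal.ofReal α * S.op α (fun _ => 1) x = 1)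
    {v : E → ℝ≥0∞} (hv : Measurable v) (hsuper : ∀ x, R.op 1 v x ≤ v x)
    (hint : ∫⁻ x, v x ∂m ≠ ⊤) : v =ᵐ[m] R.op 1 v := by
  have hmeas : Measurable (R.op 1 v) := R.measurable_op 1 one_pos v hv
  have hint2 : ∫⁻ x, R.op 1 v x ∂m = ∫⁻ x, v x ∂m := lintegral_op1 hD h1 hv
  have hz : ∫⁻ x, (v x - R.op 1 v x) ∂m = 0 := by
    rw [lintegral_sub hmeas (by rw [hint2]; exact hint) (ae_of_all _ hsuper), hint2, tsub_self]
  have h0 := (lintegral_eq_zero_iff (hv.sub hmeas)).mp hz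
  filter_upwards [h0] with x hx
  have hx' : v x - R.op 1 v x = 0 := hx
  exact le_antisymm (tsub_eq_zero_iff_le.mp hx') (hsuper x)

lemma ae_eq_opIt (hD : R.InDuality S m)
    (h1 : ∀ α : ℝ, 0 < α → ∀ᵐ x ∂m, ENNReal.ofReal α * S.op α (fun _ => 1) x = 1)
    {v : E → ℝ≥0∞} (hv : Measurable v) (hsuper : ∀ x, R.op 1 v x ≤ v x)
    (hint : ∫⁻ x, v x ∂m ≠ ⊤) : ∀ k : ℕ, v =ᵐ[m] R.opIt v k := by
  intro k
  induction k with
  | zero => exact Filter.EventuallyEq.rfl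
  | succ k ih =>
    have step1 : v =ᵐ[m] R.op 1 v := ae_eq_op1 hD h1 hv hsuper hint
    have step2 : R.op 1 v =ᵐ[m] R.op 1 (R.opIt v k) :=
      op1_congr_ae hD h1 hv (R.opIt_measurable hv k) ih
    exact step1.trans step2

end MainAux

/-- If `α U*_α 1 = 1` `m`-a.e. for all `α > 0` and there exists a strictly positive
`m`-integrable `U`-excessive function, then `U` is `m`-recurrent. -/
theorem recurrent_of_dual_conservative {E : Type*} [MeasurableSpace E]
    (R S : SubMarkovResolvent E) (m : MeasureTheory.Measure E) [MeasureTheory.SigmaFinite m]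
    (hm : R.SubInvariant m) (hD : R.InDuality S m)
    (h1 : ∀ α : ℝ, 0 < α → ∀ᵐ x ∂m, ENNReal.ofReal α * S.op α (fun _ => 1) x = 1)
    (s : E → ℝ≥0∞) (hs : R.Excessive s) (hsint : ∫⁻ x, s x ∂m < ⊤)
    (hspos : ∀ᵐ x ∂m, 0 < s x) :
    R.Recurrent m := by
  intro f hf hfint
  classical
  set v : E → ℝ≥0∞ := fun x => min (R.pot f x) (s x) with hv
  have hv_meas : Measurable v := (R.pot_measurable hf).min hs.1
  have hsuper : ∀ x, R.op 1 v x ≤ v x := by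
    intro x
    refine le_min ?_ ?_
    · calc R.op 1 v x ≤ R.op 1 (R.pot f) x := R.op_mono (fun y => min_le_left _ _) 1 x
        _ ≤ R.pot f x := R.op1_pot_le_pot hf x
    · calc R.op 1 v x ≤ R.op 1 s x := R.op_mono (fun y => min_le_right _ _) 1 x
        _ ≤ s x := by
            have := hs.2.1 1 one_pos x
            simpa using this
  have hv_int : ∫⁻ x, v x ∂m ≠ ⊤ := by
    refine ne_of_lt (lt_of_le_of_lt ?_ hsint)
    exact lintegral_mono fun x => min_le_right _ _
  have hiter : ∀ k : ℕ, v =ᵐ[m] R.opIt v k := ae_eq_opIt hD h1 hv_meas hsuper hv_int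
  have hiter' : ∀ᵐ x ∂m, ∀ k : ℕ, v x = R.opIt v k x := ae_all_iff.mpr hiter
  have hkey : ∀ᵐ x ∂m, ¬ (0 < R.pot f x ∧ R.pot f x < ⊤) := by
    filter_upwards [hiter', hspos] with x hx hsx
    rintro ⟨hpos, hfin⟩
    have hvle : ∀ k : ℕ, v x ≤ ∑' j : ℕ, R.opIt f (j + k + 1) x := by
      intro k
      calc v x = R.opIt v k x := hx k
        _ ≤ R.opIt (R.pot f) k x := R.opIt_mono (fun y => min_le_left _ _) k x
        _ = ∑' j : ℕ, R.opIt f (j + k + 1) x := R.opIt_pot_eq hf k x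
    have hsum : ∑' j : ℕ, R.opIt f (j + 1) x ≠ ⊤ := by
      rw [← R.pot_eq_tsum hf x]; exact hfin.ne
    have htail : Tendsto (fun k : ℕ => ∑' j : ℕ, R.opIt f (j + k + 1) x) atTop (𝓝 0) :=
      ENNReal.tendsto_sum_nat_add (fun j => R.opIt f (j + 1) x) hsum
    have hv0 : v x = 0 := le_antisymm (ge_of_tendsto' htail hvle) zero_le
    have hmin : R.pot f x = 0 ∨ s x = 0 :=
      min_eq_bot.mp (show min (R.pot f x) (s x) = ⊥ by rw [_root_.bot_eq_zero]; exact hv0)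
    rcases hmin with h' | h'
    · exact absurd h' (ne_of_gt hpos)
    · exact absurd h' (ne_of_gt hsx)
  have := ae_iff.mp hkey
  simpa [lt_top_iff_ne_top] using this
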